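/- If E(w) ≠ ∅ for some w ∈ Ker A^D, then E°(λw) ≠ ∅ for every λ ∈ [0,1). Consequently, 𝔇° is the interior of 𝔇 relative to Ker A^D. -/

import Mathlib

open Filter Topology

noncomputable section

/-- `g_i(w) = (1/2) wᵀ π_i w + (A^C w)_i`. -/
def gfun {m n : ℕ} (π : Fin m → Matrix (Fin n) (Fin n) ℝ)
    (AC : Matrix (Fin m) (Fin n) ℝ) (w : Fin n → ℝ) (i : Fin m) : ℝ :=
  (1 / 2) * (∑ j, ∑ k, w j * π i j k * w k) + ∑ j, AC i j * w j

/-- `f_i(v,w) = (1/2) v_i² 1_{i∈I} + Σ_{k ≤ i} A^V_{ik} v_k + g_i(w)`. -/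
def fRic {m n : ℕ} (I : Finset (Fin m)) (AV : Matrix (Fin m) (Fin m) ℝ)
    (π : Fin m → Matrix (Fin n) (Fin n) ℝ) (AC : Matrix (Fin m) (Fin n) ℝ)
    (v : Fin m → ℝ) (w : Fin n → ℝ) (i : Fin m) : ℝ :=
  (1 / 2) * (v i) ^ 2 * (if i ∈ I then 1 else 0)
    + (∑ k ∈ Finset.univ.filter (fun k => k ≤ i), AV i k * v k)
    + gfun π AC w i

/-- `E(w) = {v : f_i(v,w) ≤ 0 ∀ i}`. -/
def Eset {m n : ℕ} (I : Finset (Fin m)) (AV : Matrix (Fin m) (Fin m) ℝ)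
    (π : Fin m → Matrix (Fin n) (Fin n) ℝ) (AC : Matrix (Fin m) (Fin n) ℝ)
    (w : Fin n → ℝ) : Set (Fin m → ℝ) :=
  {v | ∀ i, fRic I AV π AC v w i ≤ 0}

/-- `E°(w) = {v : f_i(v,w) < 0 ∀ i}`. -/
def EsetO {m n : ℕ} (I : Finset (Fin m)) (AV : Matrix (Fin m) (Fin m) ℝ)
    (π : Fin m → Matrix (Fin n) (Fin n) ℝ) (AC : Matrix (Fin m) (Fin n) ℝ)
    (w : Fin n → ℝ) : Set (Fin m → ℝ) :=
  {v | ∀ i, fRic I AV π AC v w i < 0}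

/-- `𝔇 = {w ∈ Ker A^D : E(w) ≠ ∅}`. -/
def Dset {m n : ℕ} (I : Finset (Fin m)) (AV : Matrix (Fin m) (Fin m) ℝ)
    (π : Fin m → Matrix (Fin n) (Fin n) ℝ) (AC : Matrix (Fin m) (Fin n) ℝ)
    (AD : Matrix (Fin n) (Fin n) ℝ) : Set (Fin n → ℝ) :=
  {w | AD.mulVec w = 0 ∧ (Eset I AV π AC w).Nonempty}

/-- `𝔇° = {w ∈ Ker A^D : E°(w) ≠ ∅}`. -/
def DsetO {m n : ℕ} (I : Finset (Fin m)) (AV : Matrix (Fin m) (Fin m) ℝ)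
    (π : Fin m → Matrix (Fin n) (Fin n) ℝ) (AC : Matrix (Fin m) (Fin n) ℝ)
    (AD : Matrix (Fin n) (Fin n) ℝ) : Set (Fin n → ℝ) :=
  {w | AD.mulVec w = 0 ∧ (EsetO I AV π AC w).Nonempty}


lemma exists_e (m : ℕ) (hm : 1 ≤ m) (AV : Matrix (Fin m) (Fin m) ℝ)
    (hAVdiag : ∀ i, AV i i < 0) (hAVoff : ∀ i k : Fin m, i ≠ k → 0 ≤ AV i k) :
    ∃ e : Fin m → ℝ, (∀ i, 0 < e i) ∧
      ∀ i, (∑ k ∈ Finset.univ.filter (fun k => k ≤ i), AV i k * e k) < 0 := by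
  haveI : Nonempty (Fin m) := ⟨⟨0, hm⟩⟩
  set M : ℝ := ∑ p : Fin m × Fin m, |AV p.1 p.2| with hMdef
  have hM0 : 0 ≤ M := Finset.sum_nonneg fun p _ => abs_nonneg _
  have hMle : ∀ i k, AV i k ≤ M := by
    intro i k
    calc AV i k ≤ |AV i k| := le_abs_self _
    _ ≤ M := Finset.single_le_sum (f := fun p : Fin m × Fin m => |AV p.1 p.2|)
        (fun p _ => abs_nonneg _) (Finset.mem_univ (i, k))
  set δ : ℝ := Finset.univ.inf' Finset.univ_nonempty (fun i => -AV i i) with hδdef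
  have hδpos : 0 < δ := by
    rw [hδdef, Finset.lt_inf'_iff]
    intro i _
    linarith [hAVdiag i]
  have hδle : ∀ i, AV i i ≤ -δ := by
    intro i
    have := Finset.inf'_le (fun i : Fin m => -AV i i) (Finset.mem_univ i)
    linarith [this]
  set c : ℝ := (m * M + 1) / δ + 1 with hcdef
  have hc1 : 1 ≤ c := by
    have : 0 < (m * M + 1) / δ := by positivity
    simp only [hcdef]; linarith
  have hc0 : 0 < c := by linarith
  have hδc : (m : ℝ) * M < δ * c := by
    have : δ * c = (m * M + 1) + δ := by
      rw [hcdef, mul_add, mul_one]; congr 1; field_simp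
    rw [this]; linarith
  refine ⟨fun i => c ^ (i : ℕ), fun i => pow_pos hc0 _, fun i => ?_⟩
  have hsplit : Finset.univ.filter (fun k : Fin m => k ≤ i)
      = insert i (Finset.univ.filter (fun k => k < i)) := by
    ext k
    simp [Finset.mem_filter, le_iff_lt_or_eq, or_comm, eq_comm]
  rw [hsplit, Finset.sum_insert (by simp)]
  rcases Nat.eq_zero_or_pos (i : ℕ) with h0 | hpos
  · have : Finset.univ.filter (fun k : Fin m => k < i) = ∅ := by
      ext k
      simp only [Finset.mem_filter, Finset.mem_univ, true_and, Finset.notMem_empty, iff_false]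
      intro hk
      exact absurd (Fin.lt_iff_val_lt_val.mp hk) (by omega)
    rw [this, Finset.sum_empty]
    simpa [h0] using hAVdiag i
  · have hbound : ∀ k ∈ Finset.univ.filter (fun k : Fin m => k < i),
        AV i k * c ^ (k : ℕ) ≤ M * c ^ ((i : ℕ) - 1) := by
      intro k hk
      simp only [Finset.mem_filter] at hk
      have hki : (k : ℕ) < (i : ℕ) := Fin.lt_iff_val_lt_val.mp hk.2
      have h1 : AV i k ≤ M := hMle i k
      have h2 : (0:ℝ) ≤ AV i k := hAVoff i k hk.2.ne'
      have h3 : c ^ (k : ℕ) ≤ c ^ ((i : ℕ) - 1) := pow_le_pow_right₀ hc1 (by omega)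
      have h4 : (0:ℝ) < c ^ (k : ℕ) := pow_pos hc0 _
      nlinarith
    have hcard : (Finset.univ.filter (fun k : Fin m => k < i)).card ≤ m := by
      calc _ ≤ (Finset.univ : Finset (Fin m)).card := Finset.card_filter_le _ _
      _ = m := Finset.card_univ.trans (Fintype.card_fin m)
    have hsum : (∑ k ∈ Finset.univ.filter (fun k : Fin m => k < i), AV i k * c ^ (k : ℕ))
        ≤ (m : ℝ) * (M * c ^ ((i : ℕ) - 1)) := by
      calc _ ≤ (Finset.univ.filter (fun k : Fin m => k < i)).card • (M * c ^ ((i : ℕ) - 1)) :=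
            Finset.sum_le_card_nsmul _ _ _ hbound
      _ = ((Finset.univ.filter (fun k : Fin m => k < i)).card : ℝ) * (M * c ^ ((i : ℕ) - 1)) := by
            rw [nsmul_eq_mul]
      _ ≤ (m : ℝ) * (M * c ^ ((i : ℕ) - 1)) := by
            apply mul_le_mul_of_nonneg_right _ (by positivity)
            exact_mod_cast hcard
    have hdiag : AV i i * c ^ (i : ℕ) ≤ -δ * c ^ (i : ℕ) := by
      apply mul_le_mul_of_nonneg_right (hδle i) (by positivity)
    have hpow : c ^ (i : ℕ) = c ^ ((i : ℕ) - 1) * c := by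
      rw [← pow_succ]
      congr 1
      omega
    have hcpos : (0:ℝ) < c ^ ((i : ℕ) - 1) := pow_pos hc0 _
    nlinarith [hsum, hdiag, hpow, hδc, hcpos]

lemma psd_quad {n : ℕ} (P : Matrix (Fin n) (Fin n) ℝ) (hP : P.PosSemidef) (w : Fin n → ℝ) :
    0 ≤ ∑ j, ∑ k, w j * P j k * w k := by
  have h := hP.dotProduct_mulVec_nonneg w
  simp only [dotProduct, Matrix.mulVec, Pi.star_apply, star_trivial] at h
  calc (0:ℝ) ≤ ∑ j, w j * ∑ k, P j k * w k := h
  _ = ∑ j, ∑ k, w j * P j k * w k := by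
      refine Finset.sum_congr rfl fun j _ => ?_
      rw [Finset.mul_sum]
      exact Finset.sum_congr rfl fun k _ => by ring

set_option maxHeartbeats 1000000 in
lemma part1 {m n : ℕ} (hm : 1 ≤ m)
    (I : Finset (Fin m))
    (AV : Matrix (Fin m) (Fin m) ℝ)
    (hAVdiag : ∀ i : Fin m, AV i i < 0)
    (hAVoff : ∀ i k : Fin m, i ≠ k → 0 ≤ AV i k)
    (π : Fin m → Matrix (Fin n) (Fin n) ℝ)
    (hπ : ∀ i, (π i).PosSemidef)
    (AC : Matrix (Fin m) (Fin n) ℝ)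
    (w : Fin n → ℝ) (hw : (Eset I AV π AC w).Nonempty)
    (lam : ℝ) (hlam0 : 0 ≤ lam) (hlam1 : lam < 1) :
    (EsetO I AV π AC (lam • w)).Nonempty := by
  obtain ⟨v, hv⟩ := hw
  obtain ⟨e, hepos, hSe⟩ := exists_e m hm AV hAVdiag hAVoff
  haveI : Nonempty (Fin m) := ⟨⟨0, hm⟩⟩
  set Se : Fin m → ℝ := fun i => ∑ k ∈ Finset.univ.filter (fun k => k ≤ i), AV i k * e k
    with hSedef
  set t : ℝ := Finset.univ.inf' Finset.univ_nonempty
    (fun i => -((1 - lam) * Se i) / (e i)^2) with htdef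
  have htpos : 0 < t := by
    rw [htdef, Finset.lt_inf'_iff]
    intro i _
    have h1 : 0 < -((1 - lam) * Se i) := by nlinarith [hSe i]
    exact div_pos h1 (pow_pos (hepos i) 2)
  have hti : ∀ i, t * (e i)^2 ≤ -((1 - lam) * Se i) := by
    intro i
    have h : t ≤ -((1 - lam) * Se i) / (e i)^2 :=
      Finset.inf'_le (fun i => -((1 - lam) * Se i)/(e i)^2) (Finset.mem_univ i)
    have he2 : 0 < (e i)^2 := pow_pos (hepos i) 2
    calc t * (e i)^2 ≤ (-((1 - lam) * Se i)/(e i)^2) * (e i)^2 := by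
          exact mul_le_mul_of_nonneg_right h he2.le
    _ = -((1 - lam) * Se i) := div_mul_cancel₀ _ he2.ne'
  refine ⟨fun i => lam * v i + t * e i, ?_⟩
  intro i
  have hQ0 : 0 ≤ ∑ j, ∑ k, w j * π i j k * w k := psd_quad (π i) (hπ i) w
  have hv' := hv i
  rw [fRic, gfun] at hv'
  set Q : ℝ := ∑ j, ∑ k, w j * π i j k * w k with hQdef
  set L : ℝ := ∑ j, AC i j * w j with hLdef
  set S : ℝ := ∑ k ∈ Finset.univ.filter (fun k => k ≤ i), AV i k * v k with hSdef
  have hquad : ∑ j, ∑ k, (lam • w) j * π i j k * (lam • w) k = lam^2 * Q := by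
    rw [hQdef, Finset.mul_sum]
    refine Finset.sum_congr rfl fun j _ => ?_
    rw [Finset.mul_sum]
    refine Finset.sum_congr rfl fun k _ => ?_
    simp only [Pi.smul_apply, smul_eq_mul]
    ring
  have hlin : ∑ j, AC i j * (lam • w) j = lam * L := by
    rw [hLdef, Finset.mul_sum]
    refine Finset.sum_congr rfl fun j _ => ?_
    simp only [Pi.smul_apply, smul_eq_mul]
    ring
  have hsum : ∑ k ∈ Finset.univ.filter (fun k => k ≤ i),
      AV i k * ((fun j => lam * v j + t * e j) k) = lam * S + t * Se i := by
    simp only [hSdef, hSedef, Finset.mul_sum, ← Finset.sum_add_distrib]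
    refine Finset.sum_congr rfl fun k _ => ?_
    ring
  rw [fRic, gfun, hquad, hlin, hsum]
  have hkey : t^2*(e i)^2 + 2*(1-lam)*t*(Se i) < 0 := by
    nlinarith [hti i, htpos, hSe i, mul_pos htpos (mul_pos (sub_pos.mpr hlam1)
      (neg_pos.mpr (hSe i)))]
  have hSe2 : ∀ j, Se j < 0 := fun j => hSe j
  clear_value Se t Q L S
  have hDpos : 0 < 1 - lam := sub_pos.mpr hlam1
  have hkey : t^2*(e i)^2 + 2*(1-lam)*t*(Se i) < 0 := by
    nlinarith [hti i, htpos, hSe2 i, mul_pos htpos (mul_pos hDpos (neg_pos.mpr (hSe2 i)))]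
  by_cases hiI : i ∈ I
  · simp only [hiI, if_true, mul_one] at hv' ⊢
    have hP1 : (1 - lam) * (lam * ((1/2)*(v i)^2 + S + ((1/2)*Q + L))) ≤ 0 :=
      mul_nonpos_of_nonneg_of_nonpos hDpos.le
        (mul_nonpos_of_nonneg_of_nonpos hlam0 hv')
    have hP2 : (1 - lam) * ((lam^2 - lam) * Q) ≤ 0 := by
      have h2 : lam^2 - lam ≤ 0 := by nlinarith
      exact mul_nonpos_of_nonneg_of_nonpos hDpos.le
        (mul_nonpos_of_nonpos_of_nonneg h2 hQ0)
    have hP3 : 0 ≤ lam * ((1 - lam) * v i - t * e i)^2 :=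
      mul_nonneg hlam0 (sq_nonneg _)
    nlinarith [hP1, hP2, hP3, hkey, hDpos]
  · simp only [hiI, if_false, mul_zero, zero_add] at hv' ⊢
    have hA : lam * (S + ((1/2)*Q + L)) ≤ 0 :=
      mul_nonpos_of_nonneg_of_nonpos hlam0 hv'
    have hB : t * Se i < 0 := mul_neg_of_pos_of_neg htpos (hSe2 i)
    have hC : (lam^2 - lam) * Q ≤ 0 := by
      have h2 : lam^2 - lam ≤ 0 := by nlinarith
      exact mul_nonpos_of_nonpos_of_nonneg h2 hQ0
    nlinarith [hA, hB, hC]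


/-- if `E(w) ≠ ∅` for some `w ∈ Ker A^D`, then `E°(λw) ≠ ∅` for every
`λ ∈ [0,1)`; consequently `𝔇°` is the interior of `𝔇` relative to `Ker A^D`. -/
theorem stmt2 (m n : ℕ) (hm : 1 ≤ m)
    (I : Finset (Fin m)) (hI : I.Nonempty)
    (AV : Matrix (Fin m) (Fin m) ℝ)
    (hAVtri : ∀ i k : Fin m, i < k → AV i k = 0)
    (hAVdiag : ∀ i : Fin m, AV i i < 0)
    (hAVoff : ∀ i k : Fin m, i ≠ k → 0 ≤ AV i k)
    (π : Fin m → Matrix (Fin n) (Fin n) ℝ)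
    (hπ : ∀ i, (π i).PosSemidef)
    (AC : Matrix (Fin m) (Fin n) ℝ) (AD : Matrix (Fin n) (Fin n) ℝ) :
    (∀ w : Fin n → ℝ, AD.mulVec w = 0 → (Eset I AV π AC w).Nonempty →
      ∀ lam : ℝ, 0 ≤ lam → lam < 1 → (EsetO I AV π AC (lam • w)).Nonempty)
    ∧ (Subtype.val : {w : Fin n → ℝ // AD.mulVec w = 0} → (Fin n → ℝ)) ⁻¹'
          DsetO I AV π AC AD =
        interior ((Subtype.val : {w : Fin n → ℝ // AD.mulVec w = 0} → (Fin n → ℝ)) ⁻¹'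
          Dset I AV π AC AD) := by
  have part1' : ∀ w, (Eset I AV π AC w).Nonempty → ∀ lam : ℝ, 0 ≤ lam → lam < 1 →
      (EsetO I AV π AC (lam • w)).Nonempty :=
    fun w hw lam h0 h1 => part1 hm I AV hAVdiag hAVoff π hπ AC w hw lam h0 h1
  constructor
  · exact fun w _ hw lam h0 h1 => part1' w hw lam h0 h1
  · have hopen : IsOpen ((Subtype.val : {w : Fin n → ℝ // AD.mulVec w = 0} → (Fin n → ℝ)) ⁻¹'
        DsetO I AV π AC AD) := by
      have heq : (Subtype.val : {w : Fin n → ℝ // AD.mulVec w = 0} → (Fin n → ℝ)) ⁻¹'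
            DsetO I AV π AC AD
          = ⋃ v : Fin m → ℝ, ⋂ i : Fin m,
              {x : {w : Fin n → ℝ // AD.mulVec w = 0} | fRic I AV π AC v x.val i < 0} := by
        ext x
        simp only [Set.mem_preimage, DsetO, Set.mem_setOf_eq, Set.mem_iUnion, Set.mem_iInter]
        constructor
        · rintro ⟨-, v, hv⟩; exact ⟨v, hv⟩
        · rintro ⟨v, hv⟩; exact ⟨x.prop, v, hv⟩
      rw [heq]
      refine isOpen_iUnion fun v => ?_
      refine isOpen_iInter_of_finite fun i => ?_
      have hcont : Continuous fun x : {w : Fin n → ℝ // AD.mulVec w = 0} =>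
          fRic I AV π AC v x.val i := by
        have hcont2 : Continuous fun wv : Fin n → ℝ => fRic I AV π AC v wv i := by
          unfold fRic gfun
          continuity
        exact hcont2.comp continuous_subtype_val
      exact isOpen_lt hcont continuous_const
    apply Set.Subset.antisymm
    · refine interior_maximal ?_ hopen
      intro x hx
      obtain ⟨h0, v, hv⟩ := hx
      exact ⟨h0, v, fun i => (hv i).le⟩
    · intro x hx
      have hx0 : AD.mulVec x.val = 0 := x.prop
      set φ : ℝ → {w : Fin n → ℝ // AD.mulVec w = 0} :=
        fun μ => ⟨μ • x.val, by rw [Matrix.mulVec_smul, hx0, smul_zero]⟩ with hφdef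
      have hφc : Continuous φ := by
        refine Continuous.subtype_mk ?_ _
        exact continuous_id.smul continuous_const
      have hU : IsOpen (φ ⁻¹' interior
          ((Subtype.val : {w : Fin n → ℝ // AD.mulVec w = 0} → (Fin n → ℝ)) ⁻¹'
            Dset I AV π AC AD)) := isOpen_interior.preimage hφc
      have h1 : (1:ℝ) ∈ φ ⁻¹' interior
          ((Subtype.val : {w : Fin n → ℝ // AD.mulVec w = 0} → (Fin n → ℝ)) ⁻¹'
            Dset I AV π AC AD) := by
        have : φ 1 = x := Subtype.ext (one_smul ℝ x.val)
        simpa [Set.mem_preimage, this] using hx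
      obtain ⟨ε, hε, hball⟩ := Metric.isOpen_iff.mp hU 1 h1
      have hμmem : (1 + ε/2) ∈ Metric.ball (1:ℝ) ε := by
        simp only [Metric.mem_ball, Real.dist_eq]
        rw [abs_of_nonneg (by linarith)]
        linarith
      have hμU := hball hμmem
      have hμ1 : 1 < 1 + ε/2 := by linarith
      have hμ0 : (0:ℝ) < 1 + ε/2 := by linarith
      have hmem : φ (1 + ε/2) ∈ (Subtype.val : {w : Fin n → ℝ // AD.mulVec w = 0} → (Fin n → ℝ)) ⁻¹'
          Dset I AV π AC AD := interior_subset hμU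
      obtain ⟨-, hne⟩ := hmem
      have hfin := part1' ((1 + ε/2) • x.val) hne (1 + ε/2)⁻¹
        (by positivity) (by rw [inv_lt_one_iff₀]; right; exact hμ1)
      rw [smul_smul, inv_mul_cancel₀ (ne_of_gt hμ0), one_smul] at hfin
      exact ⟨x.prop, hfin⟩


end
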